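/- Let T be the tile of a weakly robust periodic solution with spatial period σ = 2 and temporal period τ, and let ℓ = p(T) − s(T) be its lag. Then rank(T) ≥ 2/gcd(τ, 2) − ℓ; that is, rank(T) ≥ 1 − ℓ if τ is even, and rank(T) ≥ 2 − ℓ if τ is odd. -/

import Mathlib

open Filter

/-- An `n`-state 2-neighbor cellular automaton rule. -/
abbrev CARule (n : ℕ) := Fin n → Fin n → Fin n

/-- One step of the CA evolution: `ξ_{t+1}(x) = f(ξ_t(x-1), ξ_t(x))`. -/
def caStep {n : ℕ} (f : CARule n) (ξ : ℤ → Fin n) : ℤ → Fin n :=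
  fun x => f (ξ (x - 1)) (ξ x)

/-- The trajectory of an initial configuration under the rule `f`. -/
def caTraj {n : ℕ} (f : CARule n) (ξ : ℤ → Fin n) : ℕ → ℤ → Fin n
  | 0 => ξ
  | t + 1 => caStep f (caTraj f ξ t)

/-- `ξ` is (the initial configuration of) a periodic solution of `f` with
minimal temporal period `τ` and minimal spatial period `σ`. -/
def IsPS {n : ℕ} (f : CARule n) (ξ : ℤ → Fin n) (τ σ : ℕ) : Prop :=
  0 < τ ∧ 0 < σ ∧
  (∀ x : ℤ, ξ (x + (σ : ℤ)) = ξ x) ∧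
  (∀ σ' : ℕ, 0 < σ' → (∀ x : ℤ, ξ (x + (σ' : ℤ)) = ξ x) → σ ≤ σ') ∧
  caTraj f ξ τ = ξ ∧
  (∀ τ' : ℕ, 0 < τ' → caTraj f ξ τ' = ξ → τ ≤ τ')

/-- `η` is a proper initial configuration for the periodic solution `ξ`:
it agrees with `ξ` at all sites `≤ y` for some `y`. -/
def IsProper {n : ℕ} (ξ η : ℤ → Fin n) : Prop :=
  ∃ y : ℤ, ∀ x ≤ y, η x = ξ x

/-- The periodic solution `ξ` of `f` is weakly robust: the expansion velocity is
positive, i.e. there is `v > 0` such that for every proper initial configuration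
`η`, eventually (in `t`) the two trajectories agree at all sites `x ≤ v·t`
(equivalently, `inf_η liminf_t s_t(η)/t > 0`). -/
def IsWeaklyRobust {n : ℕ} (f : CARule n) (ξ : ℤ → Fin n) : Prop :=
  ∃ v : ℝ, 0 < v ∧ ∀ η : ℤ → Fin n, IsProper ξ η →
    ∀ᶠ t : ℕ in atTop, ∀ x : ℤ, (x : ℝ) ≤ v * t → caTraj f η t x = caTraj f ξ t x

/-- The label (τ-periodic sequence) `A` right-extends to `B` under `f`: `A → B`. -/
def RightExtends {n : ℕ} (f : CARule n) (A B : ℕ → Fin n) : Prop :=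
  ∀ i : ℕ, f (A i) (B i) = B (i + 1)

/-- The sequence `c_{j+1} = f(a_j, c_j)` started at `c₀`. -/
def chaseSeq {n : ℕ} (f : CARule n) (A : ℕ → Fin n) (c₀ : Fin n) : ℕ → Fin n
  | 0 => c₀
  | j + 1 => f (A j) (chaseSeq f A c₀ j)

/-- The label `A` decides `B` under `f`: `A ⇒ B`. -/
def Decides {n : ℕ} (f : CARule n) (A B : ℕ → Fin n) : Prop :=
  RightExtends f A B ∧ ∀ c₀ : Fin n, ∃ j : ℕ, chaseSeq f A c₀ j = B j

/-- `T` is a (τ,σ)-periodic array (row index mod τ, column index mod σ). -/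
def IsTilePeriodic {n : ℕ} (τ σ : ℕ) (T : ℕ → ℕ → Fin n) : Prop :=
  (∀ i j, T (i + τ) j = T i j) ∧ (∀ i j, T i (j + σ) = T i j)

/-- The set of states appearing in the tile `T`. -/
def tileStates (n τ σ : ℕ) (T : ℕ → ℕ → Fin n) : Finset (Fin n) :=
  (Finset.range τ ×ˢ Finset.range σ).image fun p => T p.1 p.2

/-- The set of horizontally adjacent pairs appearing in the tile `T`. -/
def tilePairs (n τ σ : ℕ) (T : ℕ → ℕ → Fin n) : Finset (Fin n × Fin n) :=
  (Finset.range τ ×ˢ Finset.range σ).image fun p => (T p.1 p.2, T p.1 (p.2 + 1))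

/-- `T` is a tile of a periodic solution: uniqueness of assignment, each row has
minimal period `σ`, and the cyclic sequence of rows has minimal period `τ`. -/
def IsPSTile (n τ σ : ℕ) (T : ℕ → ℕ → Fin n) : Prop :=
  IsTilePeriodic τ σ T ∧
  (∀ i j k m, T i j = T k m → T i (j + 1) = T k (m + 1) →
      T (i + 1) (j + 1) = T (k + 1) (m + 1)) ∧
  (∀ i : ℕ, ∀ σ' : ℕ, 0 < σ' → (∀ j, T i (j + σ') = T i j) → σ ≤ σ') ∧
  (∀ τ' : ℕ, 0 < τ' → (∀ i j, T (i + τ') j = T i j) → τ ≤ τ')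

/-- `T` is a tile of a periodic solution of the given rule `f`. -/
def IsPSTileOf {n : ℕ} (f : CARule n) (τ σ : ℕ) (T : ℕ → ℕ → Fin n) : Prop :=
  IsTilePeriodic τ σ T ∧
  (∀ i j, f (T i j) (T i (j + 1)) = T (i + 1) (j + 1)) ∧
  (∀ i : ℕ, ∀ σ' : ℕ, 0 < σ' → (∀ j, T i (j + σ') = T i j) → σ ≤ σ') ∧
  (∀ τ' : ℕ, 0 < τ' → (∀ i j, T (i + τ') j = T i j) → τ ≤ τ')

/-- `T` is simple: the assignment number `p(T)` equals the number of states `s(T)`. -/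
def IsSimpleTile (n τ σ : ℕ) (T : ℕ → ℕ → Fin n) : Prop :=
  (tilePairs n τ σ T).card = (tileStates n τ σ T).card

/-- The rank of a tile: the largest `x` such that some `x` columns of `T`
together contain `x * τ` pairwise distinct states. -/
noncomputable def tileRank (n τ σ : ℕ) (T : ℕ → ℕ → Fin n) : ℕ :=
  sSup {x : ℕ | ∃ J : Finset ℕ, J ⊆ Finset.range σ ∧ J.card = x ∧
    ((J ×ˢ Finset.range τ).image fun p => T p.2 p.1).card = x * τ}

/-- The tile of the periodic solution `ξ` of `f`: `a_{i,j} = ξ_i(j)`. -/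
def psTile {n : ℕ} (f : CARule n) (ξ : ℤ → Fin n) : ℕ → ℕ → Fin n :=
  fun i j => caTraj f ξ i (j : ℤ)

section AuxWRPS

variable {n : ℕ} {f : CARule n} {ξ : ℤ → Fin n} {τ : ℕ}

lemma caTraj_add (f : CARule n) (ξ : ℤ → Fin n) (m t : ℕ) :
    caTraj f ξ (m + t) = caTraj f (caTraj f ξ t) m := by
  induction m with
  | zero => rw [Nat.zero_add]; rfl
  | succ m ih =>
    have h : m + 1 + t = (m + t) + 1 := by omega
    rw [h]
    show caStep f (caTraj f ξ (m + t)) = caStep f (caTraj f (caTraj f ξ t) m)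
    rw [ih]

lemma period2_val {α : Type*} (g : ℤ → α) (h : ∀ x, g (x + 2) = g x) (x : ℤ) :
    g x = g (x % 2) := by
  have key : ∀ q r : ℤ, g (2 * q + r) = g r := by
    intro q
    induction q using Int.induction_on with
    | zero => intro r; norm_num
    | succ q ih =>
      intro r
      have e : 2 * ((q : ℤ) + 1) + r = (2 * q + r) + 2 := by ring
      rw [e, h, ih]
    | pred q ih =>
      intro r
      have e : 2 * (-(q : ℤ) - 1) + r + 2 = 2 * (-(q : ℤ)) + r := by ring
      calc g (2 * (-(q : ℤ) - 1) + r) = g (2 * (-(q : ℤ) - 1) + r + 2) := (h _).symm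
        _ = g (2 * (-(q : ℤ)) + r) := by rw [e]
        _ = g r := ih r
  conv_lhs => rw [← Int.mul_ediv_add_emod x 2]
  exact key _ _

/-- Column 0 of the tile. -/
def colA {n : ℕ} (f : CARule n) (ξ : ℤ → Fin n) (i : ℕ) : Fin n := caTraj f ξ i 0
/-- Column 1 of the tile. -/
def colB {n : ℕ} (f : CARule n) (ξ : ℤ → Fin n) (i : ℕ) : Fin n := caTraj f ξ i 1

lemma sp_all (f : CARule n) (hsp2 : ∀ x : ℤ, ξ (x + 2) = ξ x) :
    ∀ i (x : ℤ), caTraj f ξ i (x + 2) = caTraj f ξ i x := by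
  intro i
  induction i with
  | zero => exact hsp2
  | succ i ih =>
    intro x
    show f (caTraj f ξ i (x + 2 - 1)) (caTraj f ξ i (x + 2)) =
      f (caTraj f ξ i (x - 1)) (caTraj f ξ i x)
    rw [show x + 2 - 1 = (x - 1) + 2 from by ring, ih, ih]

lemma colA_succ (hsp2 : ∀ x : ℤ, ξ (x + 2) = ξ x) (i : ℕ) :
    colA f ξ (i + 1) = f (colB f ξ i) (colA f ξ i) := by
  have h := sp_all f hsp2 i (-1)
  norm_num at h
  show f (caTraj f ξ i (0 - 1)) (caTraj f ξ i 0) = f (caTraj f ξ i 1) (caTraj f ξ i 0)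
  rw [show (0 : ℤ) - 1 = -1 from by ring, ← h]

lemma colB_succ (i : ℕ) :
    colB f ξ (i + 1) = f (colA f ξ i) (colB f ξ i) := by
  show f (caTraj f ξ i (1 - 1)) (caTraj f ξ i 1) = f (caTraj f ξ i 0) (caTraj f ξ i 1)
  norm_num

lemma traj_eq (hsp2 : ∀ x : ℤ, ξ (x + 2) = ξ x) {i k : ℕ}
    (hA : colA f ξ i = colA f ξ k) (hB : colB f ξ i = colB f ξ k) :
    caTraj f ξ i = caTraj f ξ k := by
  funext x
  rw [period2_val _ (sp_all f hsp2 i) x, period2_val _ (sp_all f hsp2 k) x]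
  rcases Int.emod_two_eq x with h | h <;> rw [h]
  · exact hA
  · exact hB

lemma traj_per (hτper : caTraj f ξ τ = ξ) (i : ℕ) :
    caTraj f ξ (i + τ) = caTraj f ξ i := by
  rw [caTraj_add, hτper]

lemma periodic_mod {α : Type*} (g : ℕ → α) (τ : ℕ) (hτ : 0 < τ)
    (h : ∀ j, g (j + τ) = g j) (j : ℕ) : g j = g (j % τ) := by
  induction j using Nat.strong_induction_on with
  | _ j ih =>
    by_cases hj : j < τ
    · rw [Nat.mod_eq_of_lt hj]
    · have h1 : j = (j - τ) + τ := by omega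
      calc g j = g ((j - τ) + τ) := by rw [← h1]
        _ = g (j - τ) := h _
        _ = g ((j - τ) % τ) := ih _ (by omega)
        _ = g (j % τ) := by rw [← Nat.mod_eq_sub_mod (by omega)]

lemma pair_inj (hτ0 : 0 < τ) (hsp2 : ∀ x : ℤ, ξ (x + 2) = ξ x)
    (hτper : caTraj f ξ τ = ξ)
    (hτmin : ∀ τ' : ℕ, 0 < τ' → caTraj f ξ τ' = ξ → τ ≤ τ')
    {i k : ℕ} (hi : i < τ) (hk : k < τ)
    (hA : colA f ξ i = colA f ξ k) (hB : colB f ξ i = colB f ξ k) : i = k := by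
  have aux : ∀ i k : ℕ, i < k → k < τ → caTraj f ξ i = caTraj f ξ k → False := by
    intro i k hik hkτ he
    have h2 : caTraj f ξ ((τ - k) + i) = ξ := by
      rw [caTraj_add, he, ← caTraj_add, show (τ - k) + k = τ from by omega, hτper]
    have := hτmin ((τ - k) + i) (by omega) h2
    omega
  have he := traj_eq hsp2 hA hB
  rcases lt_trichotomy i k with h | h | h
  · exact absurd (aux i k h hk he) (by simp)
  · exact h
  · exact absurd (aux k i h hi he.symm) (by simp)

lemma pair_dvd (hτ0 : 0 < τ) (hsp2 : ∀ x : ℤ, ξ (x + 2) = ξ x)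
    (hτper : caTraj f ξ τ = ξ)
    (hτmin : ∀ τ' : ℕ, 0 < τ' → caTraj f ξ τ' = ξ → τ ≤ τ')
    {i k : ℕ} (hA : colA f ξ i = colA f ξ k) (hB : colB f ξ i = colB f ξ k) :
    (τ : ℤ) ∣ (k : ℤ) - (i : ℤ) := by
  have hpa : ∀ j, colA f ξ (j + τ) = colA f ξ j := fun j => congrFun (traj_per hτper j) 0
  have hpb : ∀ j, colB f ξ (j + τ) = colB f ξ j := fun j => congrFun (traj_per hτper j) 1
  have h1 : colA f ξ (i % τ) = colA f ξ (k % τ) := by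
    rw [← periodic_mod _ τ hτ0 hpa i, ← periodic_mod _ τ hτ0 hpa k]; exact hA
  have h2 : colB f ξ (i % τ) = colB f ξ (k % τ) := by
    rw [← periodic_mod _ τ hτ0 hpb i, ← periodic_mod _ τ hτ0 hpb k]; exact hB
  have h3 : i % τ = k % τ :=
    pair_inj hτ0 hsp2 hτper hτmin (Nat.mod_lt _ hτ0) (Nat.mod_lt _ hτ0) h1 h2
  exact Nat.ModEq.dvd h3

end AuxWRPS


/-- for the tile `T` of a weakly robust periodic solution with
spatial period `σ = 2` and temporal period `τ`, with lag `ℓ = p(T) − s(T)`,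
one has `rank(T) ≥ 2/gcd(τ,2) − ℓ`. -/
theorem wrps_rank_bound_sigma_two {n : ℕ} (f : CARule n) (ξ : ℤ → Fin n)
    (τ : ℕ) (hPS : IsPS f ξ τ 2) (hWR : IsWeaklyRobust f ξ) :
    ((2 / Nat.gcd τ 2 : ℕ) : ℤ) -
        (((tilePairs n τ 2 (psTile f ξ)).card : ℤ) -
          ((tileStates n τ 2 (psTile f ξ)).card : ℤ))
      ≤ (tileRank n τ 2 (psTile f ξ) : ℤ) := by
  clear hWR
  classical
  obtain ⟨hτ0, -, hsp0, hσmin, hτper, hτmin⟩ := hPS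
  have hsp2 : ∀ x : ℤ, ξ (x + 2) = ξ x := by
    intro x; have h := hsp0 x; norm_num at h; exact h
  have hT0 : ∀ i, psTile f ξ i 0 = colA f ξ i := by intro i; simp [psTile, colA]
  have hT1 : ∀ i, psTile f ξ i 1 = colB f ξ i := by intro i; simp [psTile, colB]
  have hT2 : ∀ i, psTile f ξ i 2 = colA f ξ i := by
    intro i
    have h := sp_all f hsp2 i 0
    norm_num at h
    show caTraj f ξ i ((2 : ℕ) : ℤ) = caTraj f ξ i 0
    simpa using h
  set SA : Finset (Fin n) := (Finset.range τ).image (colA f ξ) with hSAdef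
  set SB : Finset (Fin n) := (Finset.range τ).image (colB f ξ) with hSBdef
  set PC : Finset (Fin n × Fin n) :=
    (Finset.range τ).image (fun i => (colA f ξ i, colB f ξ i)) with hPCdef
  set PD : Finset (Fin n × Fin n) :=
    (Finset.range τ).image (fun i => (colB f ξ i, colA f ξ i)) with hPDdef
  have hStates : tileStates n τ 2 (psTile f ξ) = SA ∪ SB := by
    ext u
    simp only [tileStates, hSAdef, hSBdef, Finset.mem_image, Finset.mem_product,
      Finset.mem_union, Finset.mem_range, Prod.exists]
    constructor
    · rintro ⟨i, j, ⟨hi, hj⟩, rfl⟩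
      interval_cases j
      · exact Or.inl ⟨i, hi, (hT0 i).symm⟩
      · exact Or.inr ⟨i, hi, (hT1 i).symm⟩
    · rintro (⟨i, hi, rfl⟩ | ⟨i, hi, rfl⟩)
      · exact ⟨i, 0, ⟨hi, by norm_num⟩, hT0 i⟩
      · exact ⟨i, 1, ⟨hi, by norm_num⟩, hT1 i⟩
  have hPairs : tilePairs n τ 2 (psTile f ξ) = PC ∪ PD := by
    ext u
    simp only [tilePairs, hPCdef, hPDdef, Finset.mem_image, Finset.mem_product,
      Finset.mem_union, Finset.mem_range, Prod.exists]
    constructor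
    · rintro ⟨i, j, ⟨hi, hj⟩, rfl⟩
      interval_cases j
      · exact Or.inl ⟨i, hi, by norm_num [hT0, hT1]⟩
      · exact Or.inr ⟨i, hi, by norm_num [hT1, hT2]⟩
    · rintro (⟨i, hi, rfl⟩ | ⟨i, hi, rfl⟩)
      · exact ⟨i, 0, ⟨hi, by norm_num⟩, by norm_num [hT0, hT1]⟩
      · exact ⟨i, 1, ⟨hi, by norm_num⟩, by norm_num [hT1, hT2]⟩
  have hPCcard : PC.card = τ := by
    rw [hPCdef, Finset.card_image_of_injOn, Finset.card_range]
    intro i hi k hk h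
    simp only [Finset.coe_range, Set.mem_Iio] at hi hk
    exact pair_inj hτ0 hsp2 hτper hτmin hi hk (congrArg Prod.fst h) (congrArg Prod.snd h)
  have hPDcard : PD.card = τ := by
    rw [hPDdef, Finset.card_image_of_injOn, Finset.card_range]
    intro i hi k hk h
    simp only [Finset.coe_range, Set.mem_Iio] at hi hk
    exact pair_inj hτ0 hsp2 hτper hτmin hi hk (congrArg Prod.snd h) (congrArg Prod.fst h)
  have hSAle : SA.card ≤ τ := by
    rw [hSAdef]
    exact Finset.card_image_le.trans (by simp)
  have hSBle : SB.card ≤ τ := by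
    rw [hSBdef]
    exact Finset.card_image_le.trans (by simp)
  have hfst : (tilePairs n τ 2 (psTile f ξ)).image Prod.fst = tileStates n τ 2 (psTile f ξ) := by
    rw [tilePairs, Finset.image_image]; rfl
  have hs_le_p : (tileStates n τ 2 (psTile f ξ)).card ≤ (tilePairs n τ 2 (psTile f ξ)).card := by
    rw [← hfst]; exact Finset.card_image_le
  have hbdd : BddAbove {x : ℕ | ∃ J : Finset ℕ, J ⊆ Finset.range 2 ∧ J.card = x ∧
      ((J ×ˢ Finset.range τ).image fun p => psTile f ξ p.2 p.1).card = x * τ} := by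
    refine ⟨2, ?_⟩
    rintro x ⟨J, hJ, rfl, -⟩
    simpa using Finset.card_le_card hJ
  have hcolA : ((({0} : Finset ℕ) ×ˢ Finset.range τ).image fun p => psTile f ξ p.2 p.1) = SA := by
    ext u
    simp only [hSAdef, Finset.mem_image, Finset.mem_product, Finset.mem_singleton,
      Finset.mem_range, Prod.exists]
    constructor
    · rintro ⟨j, i, ⟨rfl, hi⟩, rfl⟩; exact ⟨i, hi, (hT0 i).symm⟩
    · rintro ⟨i, hi, rfl⟩; exact ⟨0, i, ⟨rfl, hi⟩, hT0 i⟩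
  have hcolB : ((({1} : Finset ℕ) ×ˢ Finset.range τ).image fun p => psTile f ξ p.2 p.1) = SB := by
    ext u
    simp only [hSBdef, Finset.mem_image, Finset.mem_product, Finset.mem_singleton,
      Finset.mem_range, Prod.exists]
    constructor
    · rintro ⟨j, i, ⟨rfl, hi⟩, rfl⟩; exact ⟨i, hi, (hT1 i).symm⟩
    · rintro ⟨i, hi, rfl⟩; exact ⟨1, i, ⟨rfl, hi⟩, hT1 i⟩
  have hcolAB : ((Finset.range 2 ×ˢ Finset.range τ).image fun p => psTile f ξ p.2 p.1)
      = SA ∪ SB := by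
    ext u
    simp only [hSAdef, hSBdef, Finset.mem_image, Finset.mem_product, Finset.mem_union,
      Finset.mem_range, Prod.exists]
    constructor
    · rintro ⟨j, i, ⟨hj, hi⟩, rfl⟩
      interval_cases j
      · exact Or.inl ⟨i, hi, (hT0 i).symm⟩
      · exact Or.inr ⟨i, hi, (hT1 i).symm⟩
    · rintro (⟨i, hi, rfl⟩ | ⟨i, hi, rfl⟩)
      · exact ⟨0, i, ⟨by norm_num, hi⟩, hT0 i⟩
      · exact ⟨1, i, ⟨by norm_num, hi⟩, hT1 i⟩
  have hrank1A : SA.card = τ → 1 ≤ tileRank n τ 2 (psTile f ξ) := by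
    intro h
    refine le_csSup hbdd ⟨{0}, ?_, Finset.card_singleton 0, ?_⟩
    · simp
    · rw [hcolA, h, one_mul]
  have hrank1B : SB.card = τ → 1 ≤ tileRank n τ 2 (psTile f ξ) := by
    intro h
    refine le_csSup hbdd ⟨{1}, ?_, Finset.card_singleton 1, ?_⟩
    · simp
    · rw [hcolB, h, one_mul]
  have hrank2 : (SA ∪ SB).card = 2 * τ → 2 ≤ tileRank n τ 2 (psTile f ξ) := by
    intro h
    refine le_csSup hbdd ⟨Finset.range 2, subset_rfl, Finset.card_range 2, ?_⟩
    rw [hcolAB, h]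
  rcases Nat.even_or_odd τ with heven | hodd
  · -- τ even
    have hg : Nat.gcd τ 2 = 2 := Nat.gcd_eq_right heven.two_dvd
    rw [hg]
    norm_num
    by_cases hps : (tileStates n τ 2 (psTile f ξ)).card = (tilePairs n τ 2 (psTile f ξ)).card
    · have hinj : Set.InjOn Prod.fst ((tilePairs n τ 2 (psTile f ξ)) : Set (Fin n × Fin n)) := by
        apply Finset.card_image_iff.mp
        rw [hfst, hps]
      have hSAcard : SA.card = τ := by
        rw [hSAdef, Finset.card_image_of_injOn, Finset.card_range]
        intro i hi k hk h
        simp only [Finset.coe_range, Set.mem_Iio] at hi hk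
        have hmi : (colA f ξ i, colB f ξ i) ∈ tilePairs n τ 2 (psTile f ξ) := by
          rw [hPairs]
          exact Finset.mem_union_left _
            (Finset.mem_image.mpr ⟨i, Finset.mem_range.mpr hi, rfl⟩)
        have hmk : (colA f ξ k, colB f ξ k) ∈ tilePairs n τ 2 (psTile f ξ) := by
          rw [hPairs]
          exact Finset.mem_union_left _
            (Finset.mem_image.mpr ⟨k, Finset.mem_range.mpr hk, rfl⟩)
        have heq : (colA f ξ i, colB f ξ i) = (colA f ξ k, colB f ξ k) := hinj hmi hmk h
        exact pair_inj hτ0 hsp2 hτper hτmin hi hk (congrArg Prod.fst heq) (congrArg Prod.snd heq)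
      have h1 := hrank1A hSAcard
      omega
    · have hlt := lt_of_le_of_ne hs_le_p hps
      have h0 : (0 : ℤ) ≤ (tileRank n τ 2 (psTile f ξ) : ℤ) := Int.natCast_nonneg _
      omega
  · -- τ odd
    have hg : Nat.gcd τ 2 = 1 := by
      rcases (Nat.dvd_prime Nat.prime_two).mp (Nat.gcd_dvd_right τ 2) with h | h
      · exact h
      · exfalso
        have h2 : 2 ∣ τ := h ▸ Nat.gcd_dvd_left τ 2
        rw [Nat.odd_iff] at hodd
        omega
    rw [hg]
    norm_num
    have hpa : ∀ j, colA f ξ (j + τ) = colA f ξ j := fun j => congrFun (traj_per hτper j) 0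
    have hpb : ∀ j, colB f ξ (j + τ) = colB f ξ j := fun j => congrFun (traj_per hτper j) 1
    have hco : IsCoprime (τ : ℤ) 2 := by
      rw [Int.isCoprime_iff_gcd_eq_one]
      simp only [Int.gcd, Int.natAbs_natCast]
      exact hg
    have hnocross : ∀ i k, i < τ → k < τ →
        (colB f ξ i, colA f ξ i) ≠ (colA f ξ k, colB f ξ k) := by
      intro i k hi hk heq
      have hBA : colB f ξ i = colA f ξ k := congrArg Prod.fst heq
      have hAB : colA f ξ i = colB f ξ k := congrArg Prod.snd heq
      have hQ : ∀ m, colB f ξ (i + m) = colA f ξ (k + m) ∧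
          colA f ξ (i + m) = colB f ξ (k + m) := by
        intro m
        induction m with
        | zero => exact ⟨hBA, hAB⟩
        | succ m ih =>
          constructor
          · show colB f ξ ((i + m) + 1) = colA f ξ ((k + m) + 1)
            rw [colB_succ, colA_succ hsp2, ih.1, ih.2]
          · show colA f ξ ((i + m) + 1) = colB f ξ ((k + m) + 1)
            rw [colA_succ hsp2, colB_succ, ih.1, ih.2]
      obtain ⟨h1, h2⟩ := hQ (τ + i - k)
      rw [show k + (τ + i - k) = i + τ from by omega] at h1 h2
      rw [hpa] at h1
      rw [hpb] at h2
      have hA' : colA f ξ (i + (τ + i - k)) = colA f ξ k := by rw [h2, hBA]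
      have hB' : colB f ξ (i + (τ + i - k)) = colB f ξ k := by rw [h1, hAB]
      have hdvd := pair_dvd hτ0 hsp2 hτper hτmin hA' hB'
      have hcast : ((i + (τ + i - k) : ℕ) : ℤ) = 2 * (i : ℤ) + (τ : ℤ) - (k : ℤ) := by omega
      have hdvd2 : (τ : ℤ) ∣ 2 * ((k : ℤ) - (i : ℤ)) := by
        have e : 2 * ((k : ℤ) - (i : ℤ))
            = ((k : ℤ) - ((i + (τ + i - k) : ℕ) : ℤ)) + (τ : ℤ) := by
          rw [hcast]; ring
        rw [e]
        exact dvd_add hdvd (dvd_refl _)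
      have hdvd3 : (τ : ℤ) ∣ (k : ℤ) - (i : ℤ) := hco.dvd_of_dvd_mul_left hdvd2
      have hik : i = k := by
        have h0 : (k : ℤ) - (i : ℤ) = 0 :=
          Int.eq_zero_of_abs_lt_dvd hdvd3 (by rw [abs_lt]; constructor <;> omega)
        omega
      subst hik
      have hAB' : colA f ξ i = colB f ξ i := hAB
      have hEq : ∀ m, colA f ξ (i + m) = colB f ξ (i + m) := by
        intro m
        induction m with
        | zero => exact hAB'
        | succ m ih =>
          show colA f ξ ((i + m) + 1) = colB f ξ ((i + m) + 1)
          rw [colA_succ hsp2, colB_succ, ih]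
      have h00 : colA f ξ 0 = colB f ξ 0 := by
        have h := hEq (τ - i)
        rw [show i + (τ - i) = 0 + τ from by omega, hpa, hpb] at h
        exact h
      have hξ1 : ∀ x : ℤ, ξ (x + ((1 : ℕ) : ℤ)) = ξ x := by
        have hv : ∀ x : ℤ, ξ x = colA f ξ 0 := by
          intro x
          have h := period2_val ξ hsp2 x
          rcases Int.emod_two_eq x with h2 | h2 <;> rw [h2] at h
          · exact h
          · rw [h]; exact h00.symm
        intro x; rw [hv (x + ((1 : ℕ) : ℤ)), hv x]
      have := hσmin 1 one_pos hξ1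
      omega
    have hdisj : Disjoint PC PD := by
      rw [Finset.disjoint_right]
      rintro x hxD hxC
      rw [hPDdef] at hxD
      obtain ⟨i, hi, rfl⟩ := Finset.mem_image.mp hxD
      rw [hPCdef] at hxC
      obtain ⟨k, hk, heq⟩ := Finset.mem_image.mp hxC
      exact hnocross i k (Finset.mem_range.mp hi) (Finset.mem_range.mp hk) heq.symm
    have hpcard : (tilePairs n τ 2 (psTile f ξ)).card = 2 * τ := by
      rw [hPairs, Finset.card_union_of_disjoint hdisj, hPCcard, hPDcard]; ring
    have hsum : (tileStates n τ 2 (psTile f ξ)).card ≤ SA.card + SB.card := by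
      rw [hStates]; exact Finset.card_union_le _ _
    by_cases hbig : 2 * τ ≤ (tileStates n τ 2 (psTile f ξ)).card + 1
    · have hfull : SA.card = τ ∨ SB.card = τ := by omega
      have h1 : 1 ≤ tileRank n τ 2 (psTile f ξ) := by
        rcases hfull with h | h
        · exact hrank1A h
        · exact hrank1B h
      by_cases hfull2 : (tileStates n τ 2 (psTile f ξ)).card = 2 * τ
      · have h2 : 2 ≤ tileRank n τ 2 (psTile f ξ) :=
          hrank2 (by rw [← hStates]; exact hfull2)
        omega
      · have hsle : (tileStates n τ 2 (psTile f ξ)).card ≤ 2 * τ := by omega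
        omega
    · have h0 : (0 : ℤ) ≤ (tileRank n τ 2 (psTile f ξ) : ℤ) := Int.natCast_nonneg _
      omega
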